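/- Range reduction of primal feasible points: Let P ∈ ℝ^{2L×(L−1)} and Q ∈ ℝ^{2L×(L+1)} be the matrices defined below. Every matrix M feasible for the primal 2-marginal SDP satisfies M P = 0, and consequently can be written in the form M = Q M̃ Qᵀ for some symmetric positive semidefinite M̃ ∈ ℝ^{(L+1)×(L+1)}. -/
import Mathlib


open Matrix BigOperators

noncomputable section

abbrev Idx (L : ℕ) := Fin L × Fin 2

/-- The fixed 1-marginal `μ_p^(1) = (1 - ρ_p, ρ_p)ᵀ`. -/
def mu1 {L : ℕ} (ρ : Fin L → ℝ) (p : Fin L) (t : Fin 2) : ℝ :=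
  if t = 0 then 1 - ρ p else ρ p

/-- Feasibility for the primal 2-marginal SDP. -/
def PrimalFeasible {L : ℕ} (ρ : Fin L → ℝ) (M : Matrix (Idx L) (Idx L) ℝ) : Prop :=
  M.PosSemidef ∧
  (∀ p q : Fin L, p ≠ q → ∀ t u : Fin 2, 0 ≤ M (p, t) (q, u)) ∧
  (∀ p q : Fin L, p ≠ q → ∀ t : Fin 2, ∑ u : Fin 2, M (p, t) (q, u) = mu1 ρ p t) ∧
  (∀ p : Fin L, ∀ t u : Fin 2, M (p, t) (p, u) = if t = u then mu1 ρ p t else 0)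

/-- The matrix `P ∈ ℝ^{2L×(L−1)}` whose `i`-th column has `i`-th 2-block `1₂`,
`(i+1)`-st 2-block `-1₂`, and zero blocks otherwise. -/
def Pmat (L : ℕ) : Matrix (Idx L) (Fin (L - 1)) ℝ :=
  fun a i =>
    if (a.1 : ℕ) = (i : ℕ) then 1
    else if (a.1 : ℕ) = (i : ℕ) + 1 then -1 else 0

/-- The matrix `Q ∈ ℝ^{2L×(L+1)}` whose `p`-th column (`p = 1,…,L`) has `p`-th
2-block `½(1,−1)ᵀ` and zero blocks otherwise, and whose `(L+1)`-st column has every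
2-block equal to `½(1,1)ᵀ`. -/
def Qmat (L : ℕ) : Matrix (Idx L) (Fin (L + 1)) ℝ :=
  fun a j =>
    if (j : ℕ) = (a.1 : ℕ) then (if a.2 = 0 then 1 / 2 else -(1 / 2))
    else if (j : ℕ) = L then 1 / 2 else 0

/-! ### Auxiliary definitions and lemmas -/

/-- Sign of a `Fin 2` index. -/
def sgn2 (t : Fin 2) : ℝ := if t = 0 then 1 else -1

/-- A left pseudo-inverse-like matrix for `Q`. -/
def Qi (L : ℕ) : Matrix (Fin (L + 1)) (Idx L) ℝ :=
  fun j b => if (j : ℕ) = (b.1 : ℕ) then sgn2 b.2 else if (j : ℕ) = L then 1 / L else 0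

/-- The projection `Q * Qi`. -/
def PiM (L : ℕ) : Matrix (Idx L) (Idx L) ℝ :=
  fun a b => (if a.1 = b.1 then sgn2 a.2 * sgn2 b.2 / 2 else 0) + 1 / (2 * L)

/-- The correction matrix with `PiM + P * C = 1`. -/
def Cmat (L : ℕ) : Matrix (Fin (L - 1)) (Idx L) ℝ :=
  fun i b => (if (b.1 : ℕ) ≤ (i : ℕ) then 1 / 2 else 0) - ((i : ℕ) + 1) / (2 * L)

lemma sum_ite_val {N : ℕ} (n : ℕ) (f : Fin N → ℝ) :
    ∑ i : Fin N, (if (i : ℕ) = n then f i else 0)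
      = if h : n < N then f ⟨n, h⟩ else 0 := by
  split_ifs with h
  · rw [Finset.sum_eq_single (⟨n, h⟩ : Fin N)]
    · simp
    · intro j _ hj
      have hne : (j : ℕ) ≠ n := fun he => hj (Fin.ext he)
      simp [hne]
    · intro h'; exact absurd (Finset.mem_univ _) h'
  · refine Finset.sum_eq_zero fun j _ => ?_
    have hne : (j : ℕ) ≠ n := by have := j.isLt; omega
    simp [hne]

lemma sum_ite_val_succ {N : ℕ} (n : ℕ) (f : Fin N → ℝ) :
    ∑ i : Fin N, (if (i : ℕ) + 1 = n then f i else 0)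
      = if h : n - 1 < N ∧ 0 < n then f ⟨n - 1, h.1⟩ else 0 := by
  split_ifs with h
  · rw [Finset.sum_eq_single (⟨n - 1, h.1⟩ : Fin N)]
    · have hv : ((⟨n - 1, h.1⟩ : Fin N) : ℕ) = n - 1 := rfl
      rw [if_pos (by rw [hv]; omega)]
    · intro j _ hj
      have hne : ¬((j : ℕ) + 1 = n) := fun he =>
        hj (Fin.ext (show (j : ℕ) = n - 1 by omega))
      simp [hne]
    · intro h'; exact absurd (Finset.mem_univ _) h'
  · refine Finset.sum_eq_zero fun j _ => ?_
    have hne : ¬((j : ℕ) + 1 = n) := by have := j.isLt; omega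
    simp [hne]

lemma PiM_symm (L : ℕ) : (PiM L)ᵀ = PiM L := by
  ext a b
  simp only [Matrix.transpose_apply, PiM]
  rcases eq_or_ne a.1 b.1 with h | h
  · simp [h, mul_comm]
  · simp [h, h.symm]

lemma QQi (L : ℕ) : Qmat L * Qi L = PiM L := by
  ext a b
  rw [Matrix.mul_apply]
  set c : Fin (L + 1) := a.1.castSucc with hc
  set l : Fin (L + 1) := Fin.last L with hl
  have hcv : (c : ℕ) = (a.1 : ℕ) := rfl
  have hlv : (l : ℕ) = L := rfl
  have hne : (a.1 : ℕ) ≠ L := Nat.ne_of_lt a.1.isLt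
  have hbne : L ≠ (b.1 : ℕ) := (Nat.ne_of_lt b.1.isLt).symm
  have hcl : c ≠ l := by
    intro h
    have := congrArg Fin.val h
    rw [hcv, hlv] at this
    exact hne this
  have hsub : ∑ j, Qmat L a j * Qi L j b
      = ∑ j ∈ ({c, l} : Finset (Fin (L + 1))), Qmat L a j * Qi L j b := by
    refine (Finset.sum_subset (Finset.subset_univ _) ?_).symm
    intro j _ hj
    simp only [Finset.mem_insert, Finset.mem_singleton, not_or] at hj
    have h1 : (j : ℕ) ≠ (a.1 : ℕ) := fun h => hj.1 (Fin.ext (by rw [hcv]; exact h))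
    have h2 : (j : ℕ) ≠ L := fun h => hj.2 (Fin.ext (by rw [hlv]; exact h))
    simp [Qmat, h1, h2]
  rw [hsub, Finset.sum_pair hcl]
  have e1 : Qmat L a c = sgn2 a.2 / 2 := by
    simp only [Qmat, hcv, if_pos rfl, sgn2]
    split_ifs <;> norm_num
  have e2 : Qmat L a l = 1 / 2 := by
    simp only [Qmat, hlv]
    rw [if_neg (Ne.symm hne)]
    norm_num
  have e3 : Qi L c b = if a.1 = b.1 then sgn2 b.2 else 0 := by
    simp only [Qi, hcv]
    by_cases hab : a.1 = b.1
    · rw [if_pos (congrArg Fin.val hab), if_pos hab]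
    · rw [if_neg (fun h => hab (Fin.ext h)), if_neg hne, if_neg hab]
  have e4 : Qi L l b = 1 / L := by
    simp only [Qi, hlv]
    rw [if_neg hbne]
    norm_num
  rw [e1, e2, e3, e4]
  simp only [PiM]
  rcases eq_or_ne a.1 b.1 with h | h
  · rw [if_pos h, if_pos h]; ring
  · rw [if_neg h, if_neg h]; ring

lemma T_eval (L n m : ℕ) (hL : 2 ≤ L) (hn : n < L) (hm : m < L) :
    (if h : n < L - 1 then
        ((if m ≤ n then (1 : ℝ) / 2 else 0) - ((n : ℝ) + 1) / (2 * L)) else 0)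
    - (if h : n - 1 < L - 1 ∧ 0 < n then
        ((if m ≤ n - 1 then (1 : ℝ) / 2 else 0) - ((↑(n - 1) : ℝ) + 1) / (2 * L)) else 0)
    = (if n = m then (1 : ℝ) / 2 else 0) - 1 / (2 * L) := by
  rcases Nat.eq_zero_or_pos n with rfl | hpos
  · rw [dif_pos (by omega), dif_neg (by omega)]
    by_cases hm0 : m = 0
    · subst hm0
      rw [if_pos (by omega), if_pos rfl]
      push_cast; ring
    · rw [if_neg (by omega), if_neg (by omega)]
      push_cast; ring
  · obtain ⟨k, rfl⟩ : ∃ k, n = k + 1 := ⟨n - 1, by omega⟩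
    have hk1 : k + 1 - 1 = k := rfl
    rcases Nat.lt_or_ge (k + 1) (L - 1) with h1 | h1
    · rw [dif_pos h1, dif_pos (by omega)]
      rw [hk1]
      by_cases hnm : k + 1 = m
      · rw [if_pos (by omega), if_neg (by omega), if_pos hnm]
        push_cast; ring
      · by_cases hm2 : m ≤ k
        · rw [if_pos (by omega), if_pos hm2, if_neg hnm]
          push_cast; ring
        · rw [if_neg (by omega), if_neg (by omega), if_neg hnm]
          push_cast; ring
    · obtain rfl : L = k + 2 := by omega
      rw [dif_neg (by omega), dif_pos (by omega)]
      rw [hk1]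
      have h2 : ((k : ℝ) + 2) ≠ 0 := by positivity
      by_cases hnm : k + 1 = m
      · rw [if_neg (by omega), if_pos hnm]
        push_cast
        field_simp
        ring
      · rw [if_pos (by omega), if_neg hnm]
        push_cast
        field_simp
        ring

lemma key (L : ℕ) (hL : 2 ≤ L) : PiM L + Pmat L * Cmat L = 1 := by
  ext a b
  obtain ⟨p, t⟩ := a
  obtain ⟨q, u⟩ := b
  rw [Matrix.add_apply, Matrix.mul_apply, Matrix.one_apply]
  have hsplit : ∀ i : Fin (L - 1), Pmat L (p, t) i * Cmat L i (q, u)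
      = (if (i : ℕ) = (p : ℕ) then Cmat L i (q, u) else 0)
        - (if (i : ℕ) + 1 = (p : ℕ) then Cmat L i (q, u) else 0) := by
    intro i
    simp only [Pmat]
    by_cases h1 : (p : ℕ) = (i : ℕ) <;> by_cases h2 : (p : ℕ) = (i : ℕ) + 1
    · omega
    · rw [if_pos h1, if_pos h1.symm, if_neg (by omega)]; ring
    · rw [if_neg h1, if_pos h2, if_neg (by omega), if_pos h2.symm]; ring
    · rw [if_neg h1, if_neg h2, if_neg (by omega), if_neg (by omega)]; ring
  rw [Finset.sum_congr rfl fun i _ => hsplit i, Finset.sum_sub_distrib,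
    sum_ite_val, sum_ite_val_succ]
  simp only [Cmat]
  rw [T_eval L p q hL p.isLt q.isLt]
  simp only [PiM]
  by_cases hpq : p = q
  · subst hpq
    rw [if_pos rfl, if_pos rfl]
    simp only [Prod.mk.injEq, true_and]
    fin_cases t <;> fin_cases u <;> simp [sgn2] <;> ring
  · have hv : (p : ℕ) ≠ (q : ℕ) := fun h => hpq (Fin.ext h)
    rw [if_neg hpq, if_neg hv, if_neg (by simp [Prod.mk.injEq, hpq])]
    ring

/-- Range reduction of primal feasible points: every primal feasible `M` satisfies
`MP = 0` and can be written `M = Q M̃ Qᵀ` with `M̃` symmetric positive semidefinite. -/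
theorem range_reduction (L : ℕ) (hL : 2 ≤ L) (ρ : Fin L → ℝ)
    (hρ : ∀ p, 0 ≤ ρ p ∧ ρ p ≤ 1)
    (M : Matrix (Idx L) (Idx L) ℝ) (hM : PrimalFeasible ρ M) :
    M * Pmat L = 0 ∧
    ∃ Mt : Matrix (Fin (L + 1)) (Fin (L + 1)) ℝ,
      Mt.PosSemidef ∧ M = Qmat L * Mt * (Qmat L)ᵀ := by
  obtain ⟨hpsd, hnn, hmarg, hdiag⟩ := hM
  have hsym : Mᵀ = M := by
    have := hpsd.1
    rwa [Matrix.IsHermitian, Matrix.conjTranspose_eq_transpose_of_trivial] at this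
  have hrow : ∀ (p : Fin L) (t : Fin 2) (q : Fin L),
      ∑ u : Fin 2, M (p, t) (q, u) = mu1 ρ p t := by
    intro p t q
    by_cases h : p = q
    · subst h
      simp [hdiag, Finset.sum_ite_eq]
    · exact hmarg p q h t
  have hMP : M * Pmat L = 0 := by
    ext a i
    rw [Matrix.mul_apply, Matrix.zero_apply, Fintype.sum_prod_type]
    have hblk : ∀ q : Fin L, ∑ u : Fin 2, M a (q, u) * Pmat L (q, u) i
        = mu1 ρ a.1 a.2 * Pmat L (q, 0) i := by
      intro q
      have hconst : ∀ u : Fin 2, Pmat L (q, u) i = Pmat L (q, 0) i := fun u => rfl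
      calc ∑ u : Fin 2, M a (q, u) * Pmat L (q, u) i
          = (∑ u : Fin 2, M a (q, u)) * Pmat L (q, 0) i := by
            rw [Finset.sum_mul]
            rfl
        _ = mu1 ρ a.1 a.2 * Pmat L (q, 0) i := by rw [hrow a.1 a.2 q]
    rw [Finset.sum_congr rfl fun q _ => hblk q, ← Finset.mul_sum]
    have hPz : ∑ q : Fin L, Pmat L (q, 0) i = 0 := by
      have hpt : ∀ q : Fin L, Pmat L (q, 0) i
          = (if (q : ℕ) = (i : ℕ) then (1 : ℝ) else 0)
            + (if (q : ℕ) = (i : ℕ) + 1 then (-1 : ℝ) else 0) := by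
        intro q
        simp only [Pmat]
        split_ifs <;> first | omega | norm_num
      rw [Finset.sum_congr rfl fun q _ => hpt q, Finset.sum_add_distrib,
        sum_ite_val, sum_ite_val]
      have hi := i.isLt
      rw [dif_pos (show (i : ℕ) < L by omega), dif_pos (show (i : ℕ) + 1 < L by omega)]
      ring
    rw [hPz, mul_zero]
  refine ⟨hMP, Qi L * M * (Qi L)ᵀ, ?_, ?_⟩
  · have := hpsd.mul_mul_conjTranspose_same (Qi L)
    rwa [Matrix.conjTranspose_eq_transpose_of_trivial] at this
  · have hA : Qmat L * Qi L = PiM L := QQi L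
    have hk := key L hL
    have hMA : M * PiM L = M := by
      have h' : M * (PiM L + Pmat L * Cmat L) = M * 1 := by rw [hk]
      rwa [Matrix.mul_add, Matrix.mul_one, ← Matrix.mul_assoc, hMP,
        Matrix.zero_mul, add_zero] at h'
    have hAM : PiM L * M = M := by
      calc PiM L * M = (PiM L)ᵀ * Mᵀ := by rw [PiM_symm, hsym]
        _ = (M * PiM L)ᵀ := by rw [Matrix.transpose_mul]
        _ = Mᵀ := by rw [hMA]
        _ = M := hsym
    have h1 : (Qi L)ᵀ * (Qmat L)ᵀ = PiM L := by
      rw [← Matrix.transpose_mul, hA]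
      exact PiM_symm L
    calc M = PiM L * M * PiM L := by rw [hAM, hMA]
      _ = PiM L * M * ((Qi L)ᵀ * (Qmat L)ᵀ) := by rw [h1]
      _ = (Qmat L * Qi L) * M * ((Qi L)ᵀ * (Qmat L)ᵀ) := by rw [hA]
      _ = Qmat L * (Qi L * M * (Qi L)ᵀ) * (Qmat L)ᵀ := by
            simp only [Matrix.mul_assoc]
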